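/- arXiv:0804.4354 — 4 statements merged into one kernel-verified Lean document; each statement's English description precedes it below -/
import Mathlib

section
/- Let u(ξ) = U₁·tanh(C₁·ξ) + V₁·sech(C₁·ξ) + V₀ with real constants U₁, V₁, V₀ and C₁ ≠ 0, and let v, σ, C be real numbers. Then (S − v)·u(ξ) − (v²σ/2)·u′(ξ) = C holds for every ξ ∈ ℝ if and only if the following algebraic system holds: (S − v)·(U₁ + V₀) = C; V₁·(2·(S − v) + v²σ·C₁) = 0; 2·(S − v)·V₀ − 2·v²σ·C₁·U₁ = 2·C; V₁·(2·(S − v) − v²σ·C₁) = 0; (S − v)·(V₀ − U₁) = C. -/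
lemma my_hasDerivAt_tanh (y : ℝ) :
    HasDerivAt Real.tanh (1 / Real.cosh y ^ 2) y := by
  have h := (Real.hasDerivAt_sinh y).div (Real.hasDerivAt_cosh y) (Real.cosh_pos y).ne'
  have heq : (Real.cosh y * Real.cosh y - Real.sinh y * Real.sinh y) / Real.cosh y ^ 2
      = 1 / Real.cosh y ^ 2 := by
    have := Real.cosh_sq_sub_sinh_sq y; rw [show Real.cosh y * Real.cosh y - Real.sinh y * Real.sinh y = 1 by nlinarith]
  rw [heq] at h
  have hfun : (Real.sinh / Real.cosh) = Real.tanh := by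
    funext x; rw [Pi.div_apply, Real.tanh_eq_sinh_div_cosh]
  rwa [hfun] at h

lemma my_hasDerivAt_u (U₁ V₁ V₀ C₁ : ℝ) (ξ : ℝ) :
    HasDerivAt (fun x => U₁ * Real.tanh (C₁ * x) + V₁ * (1 / Real.cosh (C₁ * x)) + V₀)
      (C₁ * (U₁ * (1 / Real.cosh (C₁ * ξ)) ^ 2
        - V₁ * Real.tanh (C₁ * ξ) * (1 / Real.cosh (C₁ * ξ)))) ξ := by
  have hid : HasDerivAt (fun x : ℝ => C₁ * x) C₁ ξ := by
    simpa using (hasDerivAt_id ξ).const_mul C₁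
  have h1 : HasDerivAt (fun x => Real.tanh (C₁ * x)) (1 / Real.cosh (C₁ * ξ) ^ 2 * C₁) ξ :=
    (my_hasDerivAt_tanh (C₁ * ξ)).comp ξ hid
  have h2 : HasDerivAt (fun x => (Real.cosh (C₁ * x))⁻¹)
      (-(Real.sinh (C₁ * ξ)) / Real.cosh (C₁ * ξ) ^ 2 * C₁) ξ :=
    (((Real.hasDerivAt_cosh (C₁ * ξ)).inv (Real.cosh_pos (C₁ * ξ)).ne')).comp ξ hid
  have h := ((h1.const_mul U₁).add (h2.const_mul V₁)).add_const V₀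
  have hC := (Real.cosh_pos (C₁ * ξ)).ne'
  refine (h.congr_deriv ?_).congr_of_eventuallyEq (Filter.Eventually.of_forall fun x => ?_)
  · rw [Real.tanh_eq_sinh_div_cosh]; field_simp; ring
  · simp only [Pi.add_apply, one_div]


/-- For `u(ξ) = U₁·tanh(C₁ξ) + V₁·sech(C₁ξ) + V₀` with `C₁ ≠ 0`,
the first-order equation `(S − v)·u(ξ) − (v²σ/2)·u′(ξ) = C` holds for every `ξ`
iff the algebraic system
`(S−v)(U₁+V₀) = C`, `V₁(2(S−v)+v²σC₁) = 0`, `2(S−v)V₀ − 2v²σC₁U₁ = 2C`,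
`V₁(2(S−v)−v²σC₁) = 0`, `(S−v)(V₀−U₁) = C` holds. -/
theorem stmt_8 (σ μ Reh : ℝ) (hμ : μ * Reh ≠ 0) (m : ℕ) (γ : ℕ → ℝ)
    (S : ℝ) (hS : S = (2 * σ / (μ * Reh)) * ∑ k ∈ Finset.Icc 1 m, (k : ℝ) * γ k)
    (U₁ V₁ V₀ C₁ : ℝ) (hC₁ : C₁ ≠ 0) (v C : ℝ) (u : ℝ → ℝ)
    (hu : ∀ ξ : ℝ, u ξ =
      U₁ * Real.tanh (C₁ * ξ) + V₁ * (1 / Real.cosh (C₁ * ξ)) + V₀) :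
    (∀ ξ : ℝ, (S - v) * u ξ - v ^ 2 * σ / 2 * deriv u ξ = C)
      ↔ ((S - v) * (U₁ + V₀) = C
        ∧ V₁ * (2 * (S - v) + v ^ 2 * σ * C₁) = 0
        ∧ 2 * (S - v) * V₀ - 2 * v ^ 2 * σ * C₁ * U₁ = 2 * C
        ∧ V₁ * (2 * (S - v) - v ^ 2 * σ * C₁) = 0
        ∧ (S - v) * (V₀ - U₁) = C) := by
  
  have hu' : u = fun x => U₁ * Real.tanh (C₁ * x) + V₁ * (1 / Real.cosh (C₁ * x)) + V₀ :=
    funext hu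
  subst hu'
  have hder : ∀ ξ : ℝ, deriv (fun x => U₁ * Real.tanh (C₁ * x) + V₁ * (1 / Real.cosh (C₁ * x)) + V₀) ξ
      = C₁ * (U₁ * (1 / Real.cosh (C₁ * ξ)) ^ 2
        - V₁ * Real.tanh (C₁ * ξ) * (1 / Real.cosh (C₁ * ξ))) :=
    fun ξ => (my_hasDerivAt_u U₁ V₁ V₀ C₁ ξ).deriv
  constructor
  · intro h
    have key : ∀ ξ : ℝ,
        (S - v) * (U₁ * Real.tanh (C₁ * ξ) + V₁ * (1 / Real.cosh (C₁ * ξ)) + V₀)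
          - v ^ 2 * σ / 2 * (C₁ * (U₁ * (1 / Real.cosh (C₁ * ξ)) ^ 2
            - V₁ * Real.tanh (C₁ * ξ) * (1 / Real.cosh (C₁ * ξ)))) = C := by
      intro ξ
      have := h ξ
      rw [hder ξ] at this
      exact this
    have harg1 : C₁ * (1 / C₁) = 1 := by field_simp
    have harg2 : C₁ * (2 / C₁) = 2 := by field_simp
    have harg1' : C₁ * (-(1 / C₁)) = -1 := by field_simp
    have harg2' : C₁ * (-(2 / C₁)) = -2 := by rw [mul_neg, harg2]
    have e0 := key 0
    have e1 := key (1 / C₁)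
    have e1' := key (-(1 / C₁))
    have e2 := key (2 / C₁)
    have e2' := key (-(2 / C₁))
    rw [mul_zero, Real.tanh_zero, Real.cosh_zero] at e0
    rw [harg1] at e1
    rw [harg2] at e2
    rw [harg1', Real.tanh_neg, Real.cosh_neg] at e1'
    rw [harg2', Real.tanh_neg, Real.cosh_neg] at e2'
    -- abbreviations (values)
    have ht1 : 0 < Real.tanh 1 := by
      rw [Real.tanh_eq_sinh_div_cosh]
      exact div_pos (by have := Real.sinh_pos_iff (x := 1); simpa using this.mpr one_pos)
        (Real.cosh_pos 1)
    have ht2 : 0 < Real.tanh 2 := by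
      rw [Real.tanh_eq_sinh_div_cosh]
      exact div_pos (by have := Real.sinh_pos_iff (x := 2); simpa using this.mpr two_pos)
        (Real.cosh_pos 2)
    have hc1 : (1 : ℝ) < Real.cosh 1 := Real.one_lt_cosh.mpr one_ne_zero
    have hc12 : Real.cosh 1 < Real.cosh 2 := by
      rw [Real.cosh_lt_cosh]
      rw [abs_of_pos one_pos, abs_of_pos two_pos]; norm_num
    have hs1lt : 1 / Real.cosh 1 < 1 := by
      rw [div_lt_one (Real.cosh_pos 1)]; exact hc1
    have hs12 : 1 / Real.cosh 2 < 1 / Real.cosh 1 :=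
      one_div_lt_one_div_of_lt (Real.cosh_pos 1) hc12
    -- odd part
    have hodd1 : Real.tanh 1 * (2 * ((S - v) * U₁)
        + (v ^ 2 * σ * C₁ * V₁) * (1 / Real.cosh 1)) = 0 := by
      linear_combination e1 - e1'
    have hodd2 : Real.tanh 2 * (2 * ((S - v) * U₁)
        + (v ^ 2 * σ * C₁ * V₁) * (1 / Real.cosh 2)) = 0 := by
      linear_combination e2 - e2'
    have hodd1' := (mul_eq_zero.mp hodd1).resolve_left ht1.ne'
    have hodd2' := (mul_eq_zero.mp hodd2).resolve_left ht2.ne'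
    have hf : v ^ 2 * σ * C₁ * V₁ = 0 := by
      have hx : (v ^ 2 * σ * C₁ * V₁) * (1 / Real.cosh 1 - 1 / Real.cosh 2) = 0 := by
        linear_combination hodd1' - hodd2'
      exact (mul_eq_zero.mp hx).resolve_right (sub_ne_zero.mpr hs12.ne')
    have ha : (S - v) * U₁ = 0 := by
      linear_combination (hodd1' - (1 / Real.cosh 1) * hf) / 2
    -- even part
    have heven0 : 2 * ((S - v) * V₁) + 2 * ((S - v) * V₀) - (v ^ 2 * σ * C₁ * U₁) = 2 * C := by
      linear_combination 2 * e0
    have heven1 : 2 * ((S - v) * V₁) * (1 / Real.cosh 1) + 2 * ((S - v) * V₀)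
        - (v ^ 2 * σ * C₁ * U₁) * (1 / Real.cosh 1) ^ 2 = 2 * C := by
      linear_combination e1 + e1'
    have heven2 : 2 * ((S - v) * V₁) * (1 / Real.cosh 2) + 2 * ((S - v) * V₀)
        - (v ^ 2 * σ * C₁ * U₁) * (1 / Real.cosh 2) ^ 2 = 2 * C := by
      linear_combination e2 + e2'
    have hq1 : (1 / Real.cosh 1 - 1) * (2 * ((S - v) * V₁)
        - (v ^ 2 * σ * C₁ * U₁) * (1 / Real.cosh 1 + 1)) = 0 := by
      linear_combination heven1 - heven0
    have hq2 : (1 / Real.cosh 2 - 1) * (2 * ((S - v) * V₁)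
        - (v ^ 2 * σ * C₁ * U₁) * (1 / Real.cosh 2 + 1)) = 0 := by
      linear_combination heven2 - heven0
    have hq1' := (mul_eq_zero.mp hq1).resolve_left (sub_ne_zero.mpr hs1lt.ne)
    have hq2' := (mul_eq_zero.mp hq2).resolve_left
      (sub_ne_zero.mpr (hs12.trans hs1lt).ne)
    have hd : v ^ 2 * σ * C₁ * U₁ = 0 := by
      have hx : (v ^ 2 * σ * C₁ * U₁) * (1 / Real.cosh 2 - 1 / Real.cosh 1) = 0 := by
        linear_combination hq1' - hq2'
      exact (mul_eq_zero.mp hx).resolve_right (sub_ne_zero.mpr hs12.ne)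
    have hb : (S - v) * V₁ = 0 := by
      linear_combination (hq1' + (1 / Real.cosh 1 + 1) * hd) / 2
    have hg : (S - v) * V₀ = C := by
      linear_combination (heven0 - 2 * hb + hd) / 2
    exact ⟨by linear_combination ha + hg,
      by linear_combination 2 * hb + hf,
      by linear_combination 2 * hg - 2 * hd,
      by linear_combination 2 * hb - hf,
      by linear_combination hg - ha⟩
  · rintro ⟨h1, h2, h3, h4, h5⟩
    have ha : (S - v) * U₁ = 0 := by linear_combination (h1 - h5) / 2
    have hb : (S - v) * V₁ = 0 := by linear_combination (h2 + h4) / 4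
    have hf : v ^ 2 * σ * C₁ * V₁ = 0 := by linear_combination (h2 - h4) / 2
    have hg : (S - v) * V₀ = C := by linear_combination h1 - ha
    have hd : v ^ 2 * σ * C₁ * U₁ = 0 := by linear_combination hg - h3 / 2
    intro ξ
    rw [hder ξ]
    linear_combination Real.tanh (C₁ * ξ) * ha + (1 / Real.cosh (C₁ * ξ)) * hb
      - ((1 / Real.cosh (C₁ * ξ)) ^ 2 / 2) * hd
      + (Real.tanh (C₁ * ξ) * (1 / Real.cosh (C₁ * ξ)) / 2) * hf + hg
end

section
/- Let u(ξ) = U₁·tanh(C₁·ξ) + V₁·sech(C₁·ξ) + V₀ with real constants U₁, V₁, V₀ and C₁ ≠ 0, and let v ≠ 0, σ ≠ 0 and C be real numbers. If (S − v)·u(ξ) − (v²σ/2)·u′(ξ) = C holds for every ξ ∈ ℝ, then U₁ = 0, V₁ = 0 and (S − v)·V₀ = C; in particular u is the constant function V₀. -/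
/-- For `u(ξ) = U₁·tanh(C₁ξ) + V₁·sech(C₁ξ) + V₀` with `C₁ ≠ 0`,
`v ≠ 0`, `σ ≠ 0`, if `(S − v)·u(ξ) − (v²σ/2)·u′(ξ) = C` for every `ξ`, then
`U₁ = 0`, `V₁ = 0` and `(S − v)·V₀ = C`; in particular `u` is the constant
function `V₀`. -/
theorem stmt_9 (σ μ Reh : ℝ) (hμ : μ * Reh ≠ 0) (m : ℕ) (γ : ℕ → ℝ)
    (S : ℝ) (hS : S = (2 * σ / (μ * Reh)) * ∑ k ∈ Finset.Icc 1 m, (k : ℝ) * γ k)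
    (U₁ V₁ V₀ C₁ : ℝ) (hC₁ : C₁ ≠ 0) (v : ℝ) (hv : v ≠ 0) (hσ : σ ≠ 0) (C : ℝ)
    (u : ℝ → ℝ)
    (hu : ∀ ξ : ℝ, u ξ =
      U₁ * Real.tanh (C₁ * ξ) + V₁ * (1 / Real.cosh (C₁ * ξ)) + V₀)
    (h : ∀ ξ : ℝ, (S - v) * u ξ - v ^ 2 * σ / 2 * deriv u ξ = C) :
    U₁ = 0 ∧ V₁ = 0 ∧ (S - v) * V₀ = C ∧ ∀ ξ : ℝ, u ξ = V₀ := by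
  set a := S - v with ha
  have hue : u = fun ξ => U₁ * (Real.sinh (C₁ * ξ) / Real.cosh (C₁ * ξ))
      + V₁ * (Real.cosh (C₁ * ξ))⁻¹ + V₀ := by
    funext ξ
    rw [hu ξ, Real.tanh_eq_sinh_div_cosh, one_div]
  have hcosh_ne : ∀ x : ℝ, Real.cosh x ≠ 0 := fun x => (Real.cosh_pos (x := x)).ne'
  have hderiv : ∀ ξ : ℝ, deriv u ξ =
      C₁ * (U₁ - V₁ * Real.sinh (C₁ * ξ)) / (Real.cosh (C₁ * ξ)) ^ 2 := by
    intro ξ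
    have hl : HasDerivAt (fun ξ : ℝ => C₁ * ξ) C₁ ξ := by
      simpa using (hasDerivAt_id ξ).const_mul C₁
    have hs : HasDerivAt (fun ξ : ℝ => Real.sinh (C₁ * ξ))
        (Real.cosh (C₁ * ξ) * C₁) ξ := (Real.hasDerivAt_sinh (C₁ * ξ)).comp ξ hl
    have hc : HasDerivAt (fun ξ : ℝ => Real.cosh (C₁ * ξ))
        (Real.sinh (C₁ * ξ) * C₁) ξ := (Real.hasDerivAt_cosh (C₁ * ξ)).comp ξ hl
    have hdiv := hs.div hc (hcosh_ne _)
    have hinv := hc.inv (hcosh_ne _)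
    have H := ((hdiv.const_mul U₁).add (hinv.const_mul V₁)).add_const V₀
    rw [hue]
    rw [(show HasDerivAt (fun ξ : ℝ => U₁ * (Real.sinh (C₁ * ξ) / Real.cosh (C₁ * ξ)) + V₁ * (Real.cosh (C₁ * ξ))⁻¹ + V₀) _ ξ from H).deriv]
    have h1 : Real.cosh (C₁ * ξ) ^ 2 - Real.sinh (C₁ * ξ) ^ 2 = 1 :=
      Real.cosh_sq_sub_sinh_sq _
    field_simp
    linear_combination U₁ * h1
  have key : ∀ x : ℝ, a * (U₁ * (Real.sinh x / Real.cosh x)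
      + V₁ * (Real.cosh x)⁻¹ + V₀)
      - v ^ 2 * σ / 2 * (C₁ * (U₁ - V₁ * Real.sinh x) / (Real.cosh x) ^ 2) = C := by
    intro x
    have := h (x / C₁)
    rw [hderiv, hue] at this
    simpa [mul_div_cancel₀ _ hC₁] using this
  have h0 := key 0
  have h1 := key 1
  have hm1 := key (-1)
  have h2 := key 2
  have hm2 := key (-2)
  simp only [Real.sinh_neg, Real.cosh_neg, Real.sinh_zero, Real.cosh_zero] at h0 h1 hm1 h2 hm2
  field_simp at h0 h1 hm1 h2 hm2
  have hbne : v ^ 2 * σ * C₁ ≠ 0 := mul_ne_zero (mul_ne_zero (pow_ne_zero 2 hv) hσ) hC₁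
  have hs1 : 0 < Real.sinh 1 := Real.sinh_pos_iff.mpr one_pos
  have hs2 : 0 < Real.sinh 2 := Real.sinh_pos_iff.mpr two_pos
  have hc1 : 0 < Real.cosh 1 := Real.cosh_pos 1
  have hc2 : 0 < Real.cosh 2 := Real.cosh_pos 2
  have hgt1 : 1 < Real.cosh 1 := Real.one_lt_cosh.mpr one_ne_zero
  have hlt : Real.cosh 1 < Real.cosh 2 := by
    rw [Real.cosh_lt_cosh]
    rw [abs_of_pos one_pos, abs_of_pos two_pos]
    norm_num
  -- P1 : a*U₁*cosh 1 + (v²σ/2)C₁*V₁ = 0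
  have P1 : a * U₁ * Real.cosh 1 + v ^ 2 * σ / 2 * C₁ * V₁ = 0 := by
    have hne : Real.sinh 1 * Real.cosh 1 ^ 2 * 4 ≠ 0 := by positivity
    apply mul_left_cancel₀ hne
    rw [mul_zero]
    linear_combination Real.cosh 1 ^ 2 * (h1 - hm1)
  have P2 : a * U₁ * Real.cosh 2 + v ^ 2 * σ / 2 * C₁ * V₁ = 0 := by
    have hne : Real.sinh 2 * Real.cosh 2 ^ 2 * 4 ≠ 0 := by positivity
    apply mul_left_cancel₀ hne
    rw [mul_zero]
    linear_combination Real.cosh 2 ^ 2 * (h2 - hm2)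
  have hAU : a * U₁ = 0 := by
    have hd : a * U₁ * (Real.cosh 1 - Real.cosh 2) = 0 := by linear_combination P1 - P2
    rcases mul_eq_zero.mp hd with h | h
    · exact h
    · exact absurd h (by linarith)
  have hV₁ : V₁ = 0 := by
    have hb2 : v ^ 2 * σ / 2 * C₁ ≠ 0 :=
      mul_ne_zero (div_ne_zero (mul_ne_zero (pow_ne_zero 2 hv) hσ) two_ne_zero) hC₁
    have : v ^ 2 * σ / 2 * C₁ * V₁ = 0 := by linear_combination P1 - Real.cosh 1 * hAU
    exact (mul_eq_zero.mp this).resolve_left hb2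
  subst hV₁
  have hU₁ : U₁ = 0 := by
    have R : v ^ 2 * σ * C₁ * Real.cosh 1 ^ 2 * (Real.cosh 1 ^ 2 - 1) * U₁ = 0 := by
      linear_combination Real.cosh 1 ^ 2 * ((h1 + hm1) / 2 - Real.cosh 1 ^ 2 * h0)
    have hne : v ^ 2 * σ * C₁ * Real.cosh 1 ^ 2 * (Real.cosh 1 ^ 2 - 1) ≠ 0 := by
      apply mul_ne_zero (mul_ne_zero hbne (by positivity))
      nlinarith
    exact (mul_eq_zero.mp R).resolve_left hne
  subst hU₁
  have hC : a * V₀ = C := by linarith [h0]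
  refine ⟨rfl, rfl, hC, fun ξ => ?_⟩
  rw [hu ξ]
  ring
end

section
/- Let σ ≠ 0, v ≠ 0 and C₁ ≠ 0 be real numbers and U₁, V₁, V₀, C real unknowns. The algebraic system consisting of the five equations 2·(S − v)·(V₀ − U₁) − (v²·C₁·σ/2)·(4·U₁ + 2·V₁) = C; 2·(S − v)·V₁ = 0; 2·(S − v)·V₀ = 0; (2·(S − v) + v²·C₁·σ)·V₁ = 0; (S − v)·(U₁ + V₀) = 0 holds if and only if either (v = S, V₁ = 0 and U₁ = −C/(2·C₁·v²·σ), with V₀ arbitrary), or (v ≠ S, U₁ = V₁ = V₀ = 0 and C = 0). -/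
/-- For `σ ≠ 0`, `v ≠ 0`, `C₁ ≠ 0`, the algebraic system
`2(S−v)(V₀−U₁) − (v²C₁σ/2)(4U₁+2V₁) = C`, `2(S−v)V₁ = 0`, `2(S−v)V₀ = 0`,
`(2(S−v)+v²C₁σ)V₁ = 0`, `(S−v)(U₁+V₀) = 0` holds iff either
(`v = S`, `V₁ = 0`, `U₁ = −C/(2C₁v²σ)`, `V₀` arbitrary) or
(`v ≠ S`, `U₁ = V₁ = V₀ = 0`, `C = 0`). -/
theorem stmt_10 (σ μ Reh : ℝ) (hμ : μ * Reh ≠ 0) (m : ℕ) (γ : ℕ → ℝ)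
    (S : ℝ) (hS : S = (2 * σ / (μ * Reh)) * ∑ k ∈ Finset.Icc 1 m, (k : ℝ) * γ k)
    (hσ : σ ≠ 0) (v : ℝ) (hv : v ≠ 0) (C₁ : ℝ) (hC₁ : C₁ ≠ 0)
    (U₁ V₁ V₀ C : ℝ) :
    (2 * (S - v) * (V₀ - U₁) - v ^ 2 * C₁ * σ / 2 * (4 * U₁ + 2 * V₁) = C
        ∧ 2 * (S - v) * V₁ = 0
        ∧ 2 * (S - v) * V₀ = 0
        ∧ (2 * (S - v) + v ^ 2 * C₁ * σ) * V₁ = 0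
        ∧ (S - v) * (U₁ + V₀) = 0)
      ↔ ((v = S ∧ V₁ = 0 ∧ U₁ = -C / (2 * C₁ * v ^ 2 * σ))
        ∨ (v ≠ S ∧ U₁ = 0 ∧ V₁ = 0 ∧ V₀ = 0 ∧ C = 0)) := by
  have hvsq : v ^ 2 * C₁ * σ ≠ 0 := by positivity
  constructor
  · rintro ⟨h1, h2, h3, h4, h5⟩
    by_cases hvS : v = S
    · left
      refine ⟨hvS, ?_, ?_⟩
      · subst hvS
        simp only [sub_self, zero_mul, zero_add, mul_zero] at h4
        exact (mul_eq_zero.mp h4).resolve_left hvsq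
      · have hV1 : V₁ = 0 := by
          subst hvS
          simp only [sub_self, zero_mul, zero_add, mul_zero] at h4
          exact (mul_eq_zero.mp h4).resolve_left hvsq
        subst hvS
        rw [hV1] at h1
        field_simp at h1 ⊢
        linarith
    · right
      have hne : S - v ≠ 0 := fun h => hvS (by linarith [sub_eq_zero.mp h])
      have hV1 : V₁ = 0 := by
        rcases mul_eq_zero.mp h2 with h | h
        · exact absurd h (by simp [hne])
        · exact h
      have hV0 : V₀ = 0 := by
        rcases mul_eq_zero.mp h3 with h | h
        · exact absurd h (by simp [hne])
        · exact h
      have hU1 : U₁ = 0 := by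
        rcases mul_eq_zero.mp h5 with h | h
        · exact absurd h hne
        · rw [hV0] at h; linarith
      refine ⟨hvS, hU1, hV1, hV0, ?_⟩
      rw [hU1, hV1, hV0] at h1
      linarith
  · rintro (⟨hvS, hV1, hU1⟩ | ⟨hvS, hU1, hV1, hV0, hC⟩)
    · subst hvS
      have h2 : (2 * C₁ * v ^ 2 * σ) ≠ 0 := by positivity
      refine ⟨?_, by ring, by ring, by rw [hV1]; ring, by ring⟩
      rw [hV1, hU1]
      field_simp
      ring
    · subst hU1 hV1 hV0 hC
      refine ⟨by ring, by ring, by ring, by ring, by ring⟩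
end

section
/- Let σ ≠ 0, v ≠ 0 and C₁ ≠ 0 be real numbers and U₁, V₁, V₀ real constants, and set u(x,t) = U₁·tanh(C₁·(x − v·t)) + V₁·sech(C₁·(x − v·t)) + V₀. Then u satisfies the equivalent equation −∂u/∂t − (σ/2)·∂²u/∂t² + S·∂u/∂x = 0 at every point (x,t) ∈ ℝ² if and only if U₁ = 0 and V₁ = 0, i.e. if and only if u is constant. -/
private lemma lemA (U₁ V₁ V₀ : ℝ) (ξ : ℝ) :
    HasDerivAt (fun y : ℝ => U₁ * Real.tanh y + V₁ * (1 / Real.cosh y) + V₀)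
      ((U₁ - V₁ * Real.sinh ξ) / Real.cosh ξ ^ 2) ξ := by
  have hc : Real.cosh ξ ≠ 0 := (Real.cosh_pos ξ).ne'
  have h1 : HasDerivAt (fun y : ℝ => Real.sinh y / Real.cosh y)
      ((Real.cosh ξ * Real.cosh ξ - Real.sinh ξ * Real.sinh ξ) / Real.cosh ξ ^ 2) ξ :=
    (Real.hasDerivAt_sinh ξ).div (Real.hasDerivAt_cosh ξ) hc
  have h2 : HasDerivAt (fun y : ℝ => (Real.cosh y)⁻¹)
      (-Real.sinh ξ / Real.cosh ξ ^ 2) ξ := (Real.hasDerivAt_cosh ξ).inv hc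
  have h3 := ((h1.const_mul U₁).add (h2.const_mul V₁)).add_const V₀
  have heq : (fun y : ℝ => U₁ * Real.tanh y + V₁ * (1 / Real.cosh y) + V₀)
      = fun y : ℝ => U₁ * (Real.sinh y / Real.cosh y) + V₁ * (Real.cosh y)⁻¹ + V₀ := by
    funext y; rw [Real.tanh_eq_sinh_div_cosh, one_div]
  rw [heq]
  refine h3.congr_deriv ?_
  have hid := Real.cosh_sq_sub_sinh_sq ξ
  field_simp
  linear_combination U₁ * hid

private lemma lemB (U₁ V₁ : ℝ) (ξ : ℝ) :
    HasDerivAt (fun y : ℝ => (U₁ - V₁ * Real.sinh y) / Real.cosh y ^ 2)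
      ((-(2 * U₁ * Real.sinh ξ) - V₁ * (Real.cosh ξ ^ 2 - 2 * Real.sinh ξ ^ 2))
        / Real.cosh ξ ^ 3) ξ := by
  have hc : Real.cosh ξ ≠ 0 := (Real.cosh_pos ξ).ne'
  have hc2 : Real.cosh ξ ^ 2 ≠ 0 := pow_ne_zero _ hc
  have hnum : HasDerivAt (fun y : ℝ => U₁ - V₁ * Real.sinh y) (-(V₁ * Real.cosh ξ)) ξ :=
    ((Real.hasDerivAt_sinh ξ).const_mul V₁).const_sub U₁
  have hden : HasDerivAt (fun y : ℝ => Real.cosh y ^ 2)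
      ((2 : ℕ) * Real.cosh ξ ^ 1 * Real.sinh ξ) ξ := (Real.hasDerivAt_cosh ξ).pow 2
  have h := hnum.div hden hc2
  refine h.congr_deriv ?_
  field_simp
  ring

/-- For `σ ≠ 0`, `v ≠ 0`, `C₁ ≠ 0` and
`u(x,t) = U₁·tanh(C₁(x−vt)) + V₁·sech(C₁(x−vt)) + V₀`, the equivalent equation
`−∂u/∂t − (σ/2)·∂²u/∂t² + S·∂u/∂x = 0` holds at every point `(x,t)` iff
`U₁ = 0` and `V₁ = 0`, i.e. iff `u` is constant. -/
theorem stmt_13 (σ μ Reh : ℝ) (hμ : μ * Reh ≠ 0) (m : ℕ) (γ : ℕ → ℝ)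
    (S : ℝ) (hS : S = (2 * σ / (μ * Reh)) * ∑ k ∈ Finset.Icc 1 m, (k : ℝ) * γ k)
    (hσ : σ ≠ 0) (v : ℝ) (hv : v ≠ 0) (C₁ : ℝ) (hC₁ : C₁ ≠ 0)
    (U₁ V₁ V₀ : ℝ) (u : ℝ → ℝ → ℝ)
    (hu : ∀ x t : ℝ, u x t =
      U₁ * Real.tanh (C₁ * (x - v * t)) + V₁ * (1 / Real.cosh (C₁ * (x - v * t)))
        + V₀) :
    (∀ x t : ℝ,
        - deriv (fun s => u x s) t
        - σ / 2 * deriv (fun s => deriv (fun s' => u x s') s) t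
        + S * deriv (fun y => u y t) x = 0)
      ↔ (U₁ = 0 ∧ V₁ = 0) := by
  have hinner_t : ∀ x t : ℝ, HasDerivAt (fun s : ℝ => C₁ * (x - v * s)) (C₁ * (-v)) t := by
    intro x t
    have := (((hasDerivAt_id t).const_mul v).const_sub x).const_mul C₁
    exact this.congr_deriv (by ring)
  have hinner_x : ∀ x t : ℝ, HasDerivAt (fun y : ℝ => C₁ * (y - v * t)) C₁ x := by
    intro x t
    have := (((hasDerivAt_id x).sub_const (v * t))).const_mul C₁
    exact this.congr_deriv (by ring)
  have hdt : ∀ x t : ℝ, HasDerivAt (fun s => u x s)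
      (C₁ * (-v) * ((U₁ - V₁ * Real.sinh (C₁ * (x - v * t))) / Real.cosh (C₁ * (x - v * t)) ^ 2)) t := by
    intro x t
    have hux : (fun s => u x s) = fun s => U₁ * Real.tanh (C₁ * (x - v * s))
        + V₁ * (1 / Real.cosh (C₁ * (x - v * s))) + V₀ := funext fun s => hu x s
    rw [hux]
    have := (lemA U₁ V₁ V₀ (C₁ * (x - v * t))).comp t (hinner_t x t)
    exact this.congr_deriv (by ring)
  have hdtt : ∀ x t : ℝ, HasDerivAt (fun s => deriv (fun s' => u x s') s)
      ((C₁ * v) ^ 2 * ((-(2 * U₁ * Real.sinh (C₁ * (x - v * t)))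
          - V₁ * (Real.cosh (C₁ * (x - v * t)) ^ 2 - 2 * Real.sinh (C₁ * (x - v * t)) ^ 2))
        / Real.cosh (C₁ * (x - v * t)) ^ 3)) t := by
    intro x t
    have hfun2 : (fun s => deriv (fun s' => u x s') s)
        = fun s => C₁ * (-v) * ((U₁ - V₁ * Real.sinh (C₁ * (x - v * s))) / Real.cosh (C₁ * (x - v * s)) ^ 2) :=
      funext fun s => (hdt x s).deriv
    rw [hfun2]
    have := ((lemB U₁ V₁ (C₁ * (x - v * t))).comp t (hinner_t x t)).const_mul (C₁ * (-v))
    exact this.congr_deriv (by ring)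
  have hdx : ∀ x t : ℝ, HasDerivAt (fun y => u y t)
      (C₁ * ((U₁ - V₁ * Real.sinh (C₁ * (x - v * t))) / Real.cosh (C₁ * (x - v * t)) ^ 2)) x := by
    intro x t
    have huy : (fun y => u y t) = fun y => U₁ * Real.tanh (C₁ * (y - v * t))
        + V₁ * (1 / Real.cosh (C₁ * (y - v * t))) + V₀ := funext fun y => hu y t
    rw [huy]
    have := (lemA U₁ V₁ V₀ (C₁ * (x - v * t))).comp x (hinner_x x t)
    exact this.congr_deriv (by ring)
  constructor
  · intro H
    have hB : σ / 2 * (C₁ * v) ^ 2 ≠ 0 := by positivity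
    have Q : ∀ ξ : ℝ, (C₁ * v + S * C₁) * (Real.cosh ξ * (U₁ - V₁ * Real.sinh ξ))
        + (σ / 2 * (C₁ * v) ^ 2) * (2 * U₁ * Real.sinh ξ
            + V₁ * (Real.cosh ξ ^ 2 - 2 * Real.sinh ξ ^ 2)) = 0 := by
      intro ξ
      have h := H (ξ / C₁) 0
      have hx : C₁ * (ξ / C₁ - v * 0) = ξ := by field_simp; ring
      rw [(hdt _ _).deriv, (hdtt _ _).deriv, (hdx _ _).deriv, hx] at h
      have hc : Real.cosh ξ ≠ 0 := (Real.cosh_pos ξ).ne'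
      field_simp at h
      have h2 : (2 * Real.cosh ξ ^ 4) * ((C₁ * v + S * C₁) * (Real.cosh ξ * (U₁ - V₁ * Real.sinh ξ))
          + (σ / 2 * (C₁ * v) ^ 2) * (2 * U₁ * Real.sinh ξ
              + V₁ * (Real.cosh ξ ^ 2 - 2 * Real.sinh ξ ^ 2))) = 0 := by
        linear_combination Real.cosh ξ ^ 4 * h
      rcases mul_eq_zero.mp h2 with h3 | h3
      · exact absurd h3 (by positivity)
      · exact h3
    have Q0 := Q 0
    have Q1 := Q 1
    have Qm1 := Q (-1)
    have Q2 := Q 2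
    have Qm2 := Q (-2)
    simp only [Real.sinh_neg, Real.cosh_neg, Real.sinh_zero, Real.cosh_zero] at Q0 Q1 Qm1 Q2 Qm2
    have s1ne : Real.sinh 1 ≠ 0 := (Real.sinh_pos_iff.mpr one_pos).ne'
    have s2ne : Real.sinh 2 ≠ 0 := (Real.sinh_pos_iff.mpr two_pos).ne'
    have c12 : Real.cosh 1 < Real.cosh 2 := by
      rw [Real.cosh_lt_cosh]
      rw [abs_of_pos one_pos, abs_of_pos two_pos]; norm_num
    set A := C₁ * v + S * C₁ with hA
    set B := σ / 2 * (C₁ * v) ^ 2 with hBdef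
    have d1 : Real.sinh 1 * (4 * B * U₁ - 2 * A * Real.cosh 1 * V₁) = 0 := by
      linear_combination Q1 - Qm1
    have d2 : Real.sinh 2 * (4 * B * U₁ - 2 * A * Real.cosh 2 * V₁) = 0 := by
      linear_combination Q2 - Qm2
    have X1 : 4 * B * U₁ - 2 * A * Real.cosh 1 * V₁ = 0 := by
      rcases mul_eq_zero.mp d1 with h | h
      · exact absurd h s1ne
      · exact h
    have X2 : 4 * B * U₁ - 2 * A * Real.cosh 2 * V₁ = 0 := by
      rcases mul_eq_zero.mp d2 with h | h
      · exact absurd h s2ne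
      · exact h
    have d3 : (Real.cosh 2 - Real.cosh 1) * (2 * A * V₁) = 0 := by
      linear_combination X1 - X2
    have hAV : 2 * A * V₁ = 0 := by
      rcases mul_eq_zero.mp d3 with h | h
      · exact absurd h (by linarith)
      · exact h
    have hU : U₁ = 0 := by
      have h4 : (4 * B) * U₁ = 0 := by linear_combination X1 + Real.cosh 1 * hAV
      rcases mul_eq_zero.mp h4 with h | h
      · exact absurd h (by simpa using hB)
      · exact h
    refine ⟨hU, ?_⟩
    have hV : B * V₁ = 0 := by linear_combination Q0 - (1 : ℝ) * A * hU - U₁ * hA * 0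
    rcases mul_eq_zero.mp hV with h | h
    · exact absurd h hB
    · exact h
  · rintro ⟨h1, h2⟩ x t
    have hconst : ∀ y s : ℝ, u y s = V₀ := by intro y s; simp [hu, h1, h2]
    have e1 : (fun s => u x s) = fun _ => V₀ := funext fun s => hconst x s
    have e2 : (fun y => u y t) = fun _ => V₀ := funext fun y => hconst y t
    rw [e1, e2]
    simp
end
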